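/- Let S and A be nonempty finite sets and let 𝒫 ⊆ Δ(S)^{S×A} be a compact (not necessarily convex) uncertainty set. The following three statements are equivalent: (1) 𝒫 is weakly sa-tractable; (2) for every stationary policy π ∈ Δ(A)^S, every next-state-independent r ∈ ℝ^{S×A×S} and every γ ∈ [0,1), there exists P̂ ∈ 𝒫 such that û^π = v^{π,P̂}; (3) 𝒫 satisfies the weak sa-SSP. -/

import Mathlib

open scoped BigOperators

namespace RMDP

variable {S A : Type*} [Fintype S] [Fintype A]

def IsKernel (P : S → A → S → ℝ) : Prop := ∀ s a, P s a ∈ stdSimplex ℝ S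

def IsPolicy (π : S → A → ℝ) : Prop := ∀ s, π s ∈ stdSimplex ℝ A

def NextStateIndep (r : S → A → S → ℝ) : Prop :=
  ∀ (s : S) (a : A) (s' s'' : S), r s a s' = r s a s''

noncomputable def minOver {K : Type*} (K0 : Set K) (f : K → ℝ) : ℝ := sInf (f '' K0)

noncomputable def maxOver {K : Type*} (K0 : Set K) (f : K → ℝ) : ℝ := sSup (f '' K0)

noncomputable def TpiP (π : S → A → ℝ) (r : S → A → S → ℝ) (γ : ℝ)
    (P : S → A → S → ℝ) (v : S → ℝ) : S → ℝ :=
  fun s => ∑ a, π s a * ∑ s', P s a s' * (r s a s' + γ * v s')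

noncomputable def Tpi (US : Set (S → A → S → ℝ)) (π : S → A → ℝ)
    (r : S → A → S → ℝ) (γ : ℝ) (v : S → ℝ) : S → ℝ :=
  fun s => minOver US (fun P => ∑ a, π s a * ∑ s', P s a s' * (r s a s' + γ * v s'))

noncomputable def TpiHat (US : Set (S → A → S → ℝ)) (π : S → A → ℝ)
    (r : S → A → S → ℝ) (γ : ℝ) (v : S → ℝ) : S → ℝ :=
  fun s => ∑ a, π s a * minOver US (fun P => ∑ s', P s a s' * (r s a s' + γ * v s'))

noncomputable def Topt (US : Set (S → A → S → ℝ)) (r : S → A → S → ℝ) (γ : ℝ)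
    (v : S → ℝ) : S → ℝ :=
  fun s => maxOver (stdSimplex ℝ A)
    (fun p => minOver US (fun P => ∑ a, p a * ∑ s', P s a s' * (r s a s' + γ * v s')))

def IsHPolicy (π : List (S × A) → S → A → ℝ) : Prop := ∀ h s, π h s ∈ stdSimplex ℝ A

noncomputable def expRHH (π : List (S × A) → S → A → ℝ)
    (Q : List (S × A) → S → A → S → ℝ) (r : S → A → S → ℝ) :
    ℕ → List (S × A) → S → ℝ
  | 0, h, s => ∑ a, π h s a * ∑ s', Q (h ++ [(s, a)]) s a s' * r s a s'
  | (t + 1), h, s =>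
      ∑ a, π h s a * ∑ s', Q (h ++ [(s, a)]) s a s' * expRHH π Q r t (h ++ [(s, a)]) s'

noncomputable def vHH (π : List (S × A) → S → A → ℝ)
    (Q : List (S × A) → S → A → S → ℝ) (r : S → A → S → ℝ) (γ : ℝ) (s : S) : ℝ :=
  ∑' t : ℕ, γ ^ t * expRHH π Q r t [] s

def STractable (US : Set (S → A → S → ℝ)) : Prop :=
  ∀ π : S → A → ℝ, IsPolicy π →
    ∀ (r : S → A → S → ℝ) (γ : ℝ), 0 ≤ γ → γ < 1 →
      ∀ v : (S → A → S → ℝ) → S → ℝ, (∀ P ∈ US, TpiP π r γ P (v P) = v P) →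
        ∀ u : S → ℝ, Tpi US π r γ u = u →
          ∀ μ ∈ stdSimplex ℝ S,
            minOver US (fun P => ∑ s, μ s * v P s) = ∑ s, μ s * u s

def SATractable (US : Set (S → A → S → ℝ)) : Prop :=
  ∀ π : S → A → ℝ, IsPolicy π →
    ∀ (r : S → A → S → ℝ) (γ : ℝ), 0 ≤ γ → γ < 1 →
      ∀ v : (S → A → S → ℝ) → S → ℝ, (∀ P ∈ US, TpiP π r γ P (v P) = v P) →
        ∀ uhat : S → ℝ, TpiHat US π r γ uhat = uhat →
          ∀ μ ∈ stdSimplex ℝ S,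
            minOver US (fun P => ∑ s, μ s * v P s) = ∑ s, μ s * uhat s

def WeakSTractable (US : Set (S → A → S → ℝ)) : Prop :=
  ∀ π : S → A → ℝ, IsPolicy π →
    ∀ (r : S → A → S → ℝ), NextStateIndep r → ∀ γ : ℝ, 0 ≤ γ → γ < 1 →
      ∀ v : (S → A → S → ℝ) → S → ℝ, (∀ P ∈ US, TpiP π r γ P (v P) = v P) →
        ∀ u : S → ℝ, Tpi US π r γ u = u →
          ∀ μ ∈ stdSimplex ℝ S,
            minOver US (fun P => ∑ s, μ s * v P s) = ∑ s, μ s * u s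

def WeakSATractable (US : Set (S → A → S → ℝ)) : Prop :=
  ∀ π : S → A → ℝ, IsPolicy π →
    ∀ (r : S → A → S → ℝ), NextStateIndep r → ∀ γ : ℝ, 0 ≤ γ → γ < 1 →
      ∀ v : (S → A → S → ℝ) → S → ℝ, (∀ P ∈ US, TpiP π r γ P (v P) = v P) →
        ∀ uhat : S → ℝ, TpiHat US π r γ uhat = uhat →
          ∀ μ ∈ stdSimplex ℝ S,
            minOver US (fun P => ∑ s, μ s * v P s) = ∑ s, μ s * uhat s

def SSPs (US : Set (S → A → S → ℝ)) : Prop :=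
  ∀ V : S → A → S → ℝ, ∃ Pstar ∈ US, ∀ s : S, ∀ P ∈ US,
    (∑ a, ∑ s', Pstar s a s' * V s a s') ≤ ∑ a, ∑ s', P s a s' * V s a s'

def SSPsa (US : Set (S → A → S → ℝ)) : Prop :=
  ∀ V : S → A → S → ℝ, ∃ Pstar ∈ US, ∀ (s : S) (a : A), ∀ P ∈ US,
    (∑ s', Pstar s a s' * V s a s') ≤ ∑ s', P s a s' * V s a s'

def WeakSSPs (US : Set (S → A → S → ℝ)) : Prop :=
  ∀ π : S → A → ℝ, IsPolicy π → ∀ V : S → ℝ, ∃ Pstar ∈ US, ∀ s : S, ∀ P ∈ US,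
    (∑ a, π s a * ∑ s', Pstar s a s' * V s') ≤ ∑ a, π s a * ∑ s', P s a s' * V s'

def WeakSSPsa (US : Set (S → A → S → ℝ)) : Prop :=
  ∀ V : S → ℝ, ∃ Pstar ∈ US, ∀ (s : S) (a : A), ∀ P ∈ US,
    (∑ s', Pstar s a s' * V s') ≤ ∑ s', P s a s' * V s'


/-- Feasibility of `û^π` for next-state-independent rewards. -/
def WeakSAFeasible {S A : Type*} [Fintype S] [Fintype A] (US : Set (S → A → S → ℝ)) : Prop :=
  ∀ π : S → A → ℝ, IsPolicy π →
    ∀ r : S → A → S → ℝ, NextStateIndep r → ∀ γ : ℝ, 0 ≤ γ → γ < 1 →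
      ∀ uhat : S → ℝ, TpiHat US π r γ uhat = uhat → ∃ Phat ∈ US, TpiP π r γ Phat uhat = uhat

section Helpers

variable {S A : Type*} [Fintype S] [Fintype A]

lemma combo_le {X : Type*} [Fintype X] {p f : X → ℝ} {c : ℝ}
    (hp : p ∈ stdSimplex ℝ X) (hf : ∀ x, f x ≤ c) : ∑ x, p x * f x ≤ c := by
  calc ∑ x, p x * f x ≤ ∑ x, p x * c :=
        Finset.sum_le_sum (fun x _ => mul_le_mul_of_nonneg_left (hf x) (hp.1 x))
    _ = c := by rw [← Finset.sum_mul, hp.2, one_mul]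

lemma cont_rowsum (s : S) (a : A) (c : S → ℝ) :
    Continuous fun P : S → A → S → ℝ => ∑ s', P s a s' * c s' := by
  apply continuous_finset_sum
  intro s' _
  exact (by fun_prop : Continuous fun P : S → A → S → ℝ => P s a s').mul
    continuous_const

lemma minOver_congr {K : Type*} {K0 : Set K} {f g : K → ℝ} (h : ∀ P ∈ K0, f P = g P) :
    minOver K0 f = minOver K0 g := by
  unfold minOver
  rw [Set.image_congr h]

lemma minOver_eq_of_isLeast {K : Type*} {K0 : Set K} {f : K → ℝ} {P0 : K} (h0 : P0 ∈ K0)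
    (hlb : ∀ P ∈ K0, f P0 ≤ f P) : minOver K0 f = f P0 :=
  IsLeast.csInf_eq ⟨Set.mem_image_of_mem f h0, by rintro x ⟨P, hP, rfl⟩; exact hlb P hP⟩

lemma exists_min {US : Set (S → A → S → ℝ)} (hne : US.Nonempty) (hcpt : IsCompact US)
    {f : (S → A → S → ℝ) → ℝ} (hf : ContinuousOn f US) :
    ∃ P0 ∈ US, minOver US f = f P0 ∧ ∀ P ∈ US, f P0 ≤ f P := by
  obtain ⟨P0, hP0, hmin⟩ := hcpt.exists_isMinOn hne hf
  have hlb : ∀ P ∈ US, f P0 ≤ f P := fun P hP => (isMinOn_iff.mp hmin) P hP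
  exact ⟨P0, hP0, minOver_eq_of_isLeast hP0 hlb, hlb⟩

lemma minOver_le_of_min {K : Type*} {K0 : Set K} {f : K → ℝ} {P0 P : K}
    (h0 : P0 ∈ K0) (hlb : ∀ P ∈ K0, f P0 ≤ f P) (hP : P ∈ K0) : minOver K0 f ≤ f P := by
  rw [minOver_eq_of_isLeast h0 hlb]; exact hlb P hP

lemma minOver_affine {US : Set (S → A → S → ℝ)} (hne : US.Nonempty) (hcpt : IsCompact US)
    {f : (S → A → S → ℝ) → ℝ} (hf : ContinuousOn f US) (c γ : ℝ) (hγ : 0 ≤ γ) :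
    minOver US (fun P => c + γ * f P) = c + γ * minOver US f := by
  obtain ⟨P0, h0, heq, hlb⟩ := exists_min hne hcpt hf
  rw [heq]
  exact minOver_eq_of_isLeast h0 fun P hP =>
    add_le_add_right (mul_le_mul_of_nonneg_left (hlb P hP) hγ) c

end Helpers

set_option linter.unusedSectionVars false

section Helpers2

variable {S A : Type*} [Fintype S] [Fintype A]

lemma rowsum_nsi {r : S → A → S → ℝ} (hr : NextStateIndep r) {P : S → A → S → ℝ}
    (s : S) (a : A) (hP : P s a ∈ stdSimplex ℝ S) (γ : ℝ) (u : S → ℝ) (s1 : S) :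
    ∑ s', P s a s' * (r s a s' + γ * u s') = r s a s1 + γ * ∑ s', P s a s' * u s' := by
  have : ∀ s', P s a s' * (r s a s' + γ * u s')
      = P s a s' * r s a s1 + γ * (P s a s' * u s') := by
    intro s'
    rw [hr s a s' s1]; ring
  rw [Finset.sum_congr rfl (fun s' _ => this s'), Finset.sum_add_distrib, ← Finset.sum_mul,
    ← Finset.mul_sum, hP.2, one_mul]

lemma tpiP_sub {π : S → A → ℝ} {r : S → A → S → ℝ} {γ : ℝ} {P : S → A → S → ℝ}
    (u w : S → ℝ) (s : S) :
    TpiP π r γ P u s - TpiP π r γ P w s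
      = ∑ a, π s a * (γ * ∑ s', P s a s' * (u s' - w s')) := by
  unfold TpiP
  rw [← Finset.sum_sub_distrib]
  refine Finset.sum_congr rfl fun a _ => ?_
  rw [← mul_sub]
  congr 1
  rw [← Finset.sum_sub_distrib, Finset.mul_sum]
  refine Finset.sum_congr rfl fun s' _ => ?_
  ring

lemma tpiHat_le_tpiP {US : Set (S → A → S → ℝ)} (hne : US.Nonempty) (hcpt : IsCompact US)
    {π : S → A → ℝ} (hπ : IsPolicy π) {r : S → A → S → ℝ} {γ : ℝ}
    {P : S → A → S → ℝ} (hP : P ∈ US) (u : S → ℝ) (s : S) :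
    TpiHat US π r γ u s ≤ TpiP π r γ P u s := by
  unfold TpiHat TpiP
  refine Finset.sum_le_sum fun a _ => mul_le_mul_of_nonneg_left ?_ ((hπ s).1 a)
  obtain ⟨P0, h0, _, hlb⟩ := exists_min hne hcpt
    (cont_rowsum s a (fun s' => r s a s' + γ * u s')).continuousOn
  exact minOver_le_of_min h0 hlb hP

/-- Comparison: if `u ≤ T_P u` pointwise and `w` is a fixed point of `T_P`, then `u ≤ w`. -/
lemma le_fixed_of_sub {π : S → A → ℝ} (hπ : IsPolicy π) {r : S → A → S → ℝ} {γ : ℝ}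
    (hγ0 : 0 ≤ γ) (hγ1 : γ < 1) {P : S → A → S → ℝ} (hPk : IsKernel P)
    {u w : S → ℝ} [Nonempty S]
    (hu : ∀ s, u s ≤ TpiP π r γ P u s) (hw : TpiP π r γ P w = w) :
    ∀ s, u s ≤ w s := by
  obtain ⟨s0, -, hs0⟩ := Finset.exists_max_image Finset.univ (fun s => u s - w s)
    ⟨Classical.arbitrary S, Finset.mem_univ _⟩
  have key : u s0 - w s0 ≤ γ * (u s0 - w s0) := by
    have h1 : u s0 - w s0 ≤ TpiP π r γ P u s0 - TpiP π r γ P w s0 := by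
      have := hu s0
      rw [hw]
      linarith [hu s0]
    have h2 : TpiP π r γ P u s0 - TpiP π r γ P w s0 ≤ γ * (u s0 - w s0) := by
      rw [tpiP_sub]
      have : ∀ a, γ * ∑ s', P s0 a s' * (u s' - w s') ≤ γ * (u s0 - w s0) := by
        intro a
        refine mul_le_mul_of_nonneg_left ?_ hγ0
        exact combo_le (hPk s0 a) fun s' => hs0 s' (Finset.mem_univ _)
      exact combo_le (hπ s0) this
    linarith
  have hle0 : u s0 - w s0 ≤ 0 := by nlinarith
  intro s
  have := hs0 s (Finset.mem_univ _)
  linarith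

lemma tpiP_uniq {π : S → A → ℝ} (hπ : IsPolicy π) {r : S → A → S → ℝ} {γ : ℝ}
    (hγ0 : 0 ≤ γ) (hγ1 : γ < 1) {P : S → A → S → ℝ} (hPk : IsKernel P)
    {u w : S → ℝ} [Nonempty S]
    (hu : TpiP π r γ P u = u) (hw : TpiP π r γ P w = w) : u = w := by
  funext s
  have h1 := le_fixed_of_sub hπ hγ0 hγ1 hPk (u := u) (fun s => (congrFun hu s).ge) hw
  have h2 := le_fixed_of_sub hπ hγ0 hγ1 hPk (u := w) (fun s => (congrFun hw s).ge) hu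
  exact le_antisymm (h1 s) (h2 s)

lemma uhat_le_vP {US : Set (S → A → S → ℝ)} (hne : US.Nonempty) (hcpt : IsCompact US)
    {π : S → A → ℝ} (hπ : IsPolicy π) {r : S → A → S → ℝ} {γ : ℝ}
    (hγ0 : 0 ≤ γ) (hγ1 : γ < 1) {P : S → A → S → ℝ} (hP : P ∈ US) (hPk : IsKernel P)
    {u w : S → ℝ} [Nonempty S]
    (hu : TpiHat US π r γ u = u) (hw : TpiP π r γ P w = w) :
    ∀ s, u s ≤ w s := by
  refine le_fixed_of_sub hπ hγ0 hγ1 hPk (fun s => ?_) hw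
  conv_lhs => rw [← hu]
  exact tpiHat_le_tpiP hne hcpt hπ hP u s

lemma tpiP_lipschitz {π : S → A → ℝ} (hπ : IsPolicy π) {r : S → A → S → ℝ} {γ : ℝ}
    (hγ0 : 0 ≤ γ) {P : S → A → S → ℝ} (hPk : IsKernel P) :
    LipschitzWith ⟨γ, hγ0⟩ (TpiP π r γ P) := by
  apply LipschitzWith.of_dist_le_mul
  intro u w
  have hd : (0:ℝ) ≤ γ * dist u w := mul_nonneg hγ0 dist_nonneg
  show dist (TpiP π r γ P u) (TpiP π r γ P w) ≤ γ * dist u w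
  rw [dist_pi_le_iff hd]
  intro s
  rw [Real.dist_eq, tpiP_sub]
  calc |∑ a, π s a * (γ * ∑ s', P s a s' * (u s' - w s'))|
      ≤ ∑ a, |π s a * (γ * ∑ s', P s a s' * (u s' - w s'))| :=
        Finset.abs_sum_le_sum_abs _ _
    _ ≤ ∑ a, π s a * (γ * dist u w) := by
        refine Finset.sum_le_sum fun a _ => ?_
        rw [abs_mul, abs_of_nonneg ((hπ s).1 a), abs_mul, abs_of_nonneg hγ0]
        refine mul_le_mul_of_nonneg_left (mul_le_mul_of_nonneg_left ?_ hγ0) ((hπ s).1 a)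
        calc |∑ s', P s a s' * (u s' - w s')| ≤ ∑ s', |P s a s' * (u s' - w s')| :=
              Finset.abs_sum_le_sum_abs _ _
          _ = ∑ s', P s a s' * |u s' - w s'| := by
              refine Finset.sum_congr rfl fun s' _ => ?_
              rw [abs_mul, abs_of_nonneg ((hPk s a).1 s')]
          _ ≤ dist u w := combo_le (hPk s a) fun s' => by
              rw [← Real.dist_eq]; exact dist_le_pi_dist u w s'
    _ = γ * dist u w := by rw [← Finset.sum_mul, (hπ s).2, one_mul]

lemma tpiP_exists_fixed {π : S → A → ℝ} (hπ : IsPolicy π) {r : S → A → S → ℝ} {γ : ℝ}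
    (hγ0 : 0 ≤ γ) (hγ1 : γ < 1) {P : S → A → S → ℝ} (hPk : IsKernel P) [Nonempty S] :
    ∃ u : S → ℝ, TpiP π r γ P u = u := by
  have hC : ContractingWith ⟨γ, hγ0⟩ (TpiP π r γ P) :=
    ⟨by exact_mod_cast hγ1, tpiP_lipschitz hπ hγ0 hPk⟩
  exact ⟨hC.fixedPoint (TpiP π r γ P), hC.fixedPoint_isFixedPt⟩

end Helpers2

theorem stmt16 {S A : Type*} [Fintype S] [Fintype A] [Nonempty S] [Nonempty A]
    (US : Set (S → A → S → ℝ)) (hne : US.Nonempty) (hker : ∀ P ∈ US, IsKernel P)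
    (hcpt : IsCompact US) :
    (WeakSATractable US ↔ WeakSAFeasible US) ∧ (WeakSAFeasible US ↔ WeakSSPsa US) := by
  classical
  -- (3) → (2)
  have impl1 : WeakSSPsa US → WeakSAFeasible US := by
    intro hssp π hπ r hr γ hγ0 hγ1 uhat huhat
    obtain ⟨Pstar, hPs, hmin⟩ := hssp uhat
    refine ⟨Pstar, hPs, ?_⟩
    have hTs : ∀ s, TpiP π r γ Pstar uhat s = TpiHat US π r γ uhat s := by
      intro s
      unfold TpiP TpiHat
      refine Finset.sum_congr rfl fun a _ => ?_
      congr 1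
      refine (minOver_eq_of_isLeast (f := fun P => ∑ s', P s a s' * (r s a s' + γ * uhat s'))
        hPs fun P hP => ?_).symm
      rw [rowsum_nsi hr s a ((hker Pstar hPs) s a) γ uhat (Classical.arbitrary S),
          rowsum_nsi hr s a ((hker P hP) s a) γ uhat (Classical.arbitrary S)]
      exact add_le_add_right (mul_le_mul_of_nonneg_left (hmin s a P hP) hγ0) _
    funext s
    rw [hTs s, huhat]
  -- (2) → (3)
  have impl2 : WeakSAFeasible US → WeakSSPsa US := by
    intro hfeas V
    have hcardA : (0:ℝ) < (Fintype.card A : ℝ) := by exact_mod_cast Fintype.card_pos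
    set π : S → A → ℝ := fun _ _ => (Fintype.card A : ℝ)⁻¹ with hπdef
    have hπ : IsPolicy π := by
      intro s
      refine ⟨fun a => by positivity, ?_⟩
      simp only [hπdef, Finset.sum_const, Finset.card_univ, nsmul_eq_mul]
      field_simp
    set m : S → A → ℝ := fun s a => minOver US (fun P => ∑ s', P s a s' * V s') with hmdef
    set γ : ℝ := 1/2 with hγdef
    set r : S → A → S → ℝ := fun s a _ => V s - γ * m s a with hrdef
    have hr : NextStateIndep r := fun s a s' s'' => rfl
    have hminsa : ∀ s a, ∃ P0 ∈ US, m s a = (∑ s', P0 s a s' * V s') ∧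
        ∀ P ∈ US, (∑ s', P0 s a s' * V s') ≤ ∑ s', P s a s' * V s' :=
      fun s a => exists_min hne hcpt (cont_rowsum s a V).continuousOn
    have hγ0 : (0:ℝ) ≤ γ := by norm_num [hγdef]
    have hrow : ∀ s a, ∀ P ∈ US, (∑ s', P s a s' * (r s a s' + γ * V s'))
        = (V s - γ * m s a) + γ * (∑ s', P s a s' * V s') := by
      intro s a P hP
      exact rowsum_nsi hr s a ((hker P hP) s a) γ V (Classical.arbitrary S)
    have hfix : TpiHat US π r γ V = V := by
      funext s
      unfold TpiHat
      have hterm : ∀ a, minOver US (fun P => ∑ s', P s a s' * (r s a s' + γ * V s')) = V s := by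
        intro a
        rw [minOver_congr (hrow s a),
          minOver_affine hne hcpt (cont_rowsum s a V).continuousOn _ γ hγ0]
        have hm : minOver US (fun P => ∑ s', P s a s' * V s') = m s a := rfl
        rw [hm]; ring
      rw [Finset.sum_congr rfl fun a _ => by rw [hterm a]]
      rw [← Finset.sum_mul, (hπ s).2, one_mul]
    obtain ⟨Phat, hPh, hfixP⟩ := hfeas π hπ r hr γ hγ0 (by norm_num [hγdef]) V hfix
    refine ⟨Phat, hPh, fun s a P hP => ?_⟩
    have hkey : ∑ s', Phat s a s' * V s' = m s a := by
      have hVs : V s = ∑ b, π s b * (V s - γ * m s b + γ * m s b) := by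
        have : ∀ b, V s - γ * m s b + γ * m s b = V s := fun b => by ring
        rw [Finset.sum_congr rfl fun b _ => by rw [this b], ← Finset.sum_mul, (hπ s).2, one_mul]
      have hTP : TpiP π r γ Phat V s = ∑ b, π s b *
          (V s - γ * m s b + γ * (∑ s', Phat s b s' * V s')) := by
        unfold TpiP
        exact Finset.sum_congr rfl fun b _ => by rw [hrow s b Phat hPh]
      have hzero : ∑ b, π s b * (γ * ((∑ s', Phat s b s' * V s') - m s b)) = 0 := by
        have h1 : TpiP π r γ Phat V s = V s := congrFun hfixP s
        calc ∑ b, π s b * (γ * ((∑ s', Phat s b s' * V s') - m s b))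
            = ∑ b, π s b * (V s - γ * m s b + γ * (∑ s', Phat s b s' * V s'))
              - ∑ b, π s b * (V s - γ * m s b + γ * m s b) := by
              rw [← Finset.sum_sub_distrib]
              exact Finset.sum_congr rfl fun b _ => by ring
          _ = TpiP π r γ Phat V s - V s := by rw [← hTP, ← hVs]
          _ = 0 := by rw [h1, sub_self]
      have hnn : ∀ b ∈ Finset.univ, 0 ≤ π s b * (γ * ((∑ s', Phat s b s' * V s') - m s b)) := by
        intro b _
        obtain ⟨P0, h0, he, hlb⟩ := hminsa s b
        have : m s b ≤ ∑ s', Phat s b s' * V s' := he ▸ hlb Phat hPh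
        exact mul_nonneg ((hπ s).1 b) (mul_nonneg hγ0 (by linarith))
      have := (Finset.sum_eq_zero_iff_of_nonneg hnn).mp hzero a (Finset.mem_univ a)
      have hπpos : (0:ℝ) < π s a := by
        simp only [hπdef]
        positivity
      have hγpos : (0:ℝ) < γ := by norm_num [hγdef]
      rcases mul_eq_zero.mp this with h | h
      · exact absurd h hπpos.ne'
      rcases mul_eq_zero.mp h with h' | h'
      · exact absurd h' hγpos.ne'
      linarith [sub_eq_zero.mp h']
    rw [hkey]
    obtain ⟨P0, h0, he, hlb⟩ := hminsa s a
    exact he ▸ hlb P hP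
  -- (2) → (1)
  have impl3 : WeakSAFeasible US → WeakSATractable US := by
    intro hfeas π hπ r hr γ hγ0 hγ1 v hv uhat huhat μ hμ
    obtain ⟨Phat, hPh, hfixP⟩ := hfeas π hπ r hr γ hγ0 hγ1 uhat huhat
    have hvPhat : v Phat = uhat := tpiP_uniq hπ hγ0 hγ1 (hker Phat hPh) (hv Phat hPh) hfixP
    have hlow : ∀ P ∈ US, ∑ s, μ s * uhat s ≤ ∑ s, μ s * v P s := by
      intro P hP
      refine Finset.sum_le_sum fun s _ => mul_le_mul_of_nonneg_left ?_ (hμ.1 s)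
      exact uhat_le_vP hne hcpt hπ hγ0 hγ1 hP (hker P hP) huhat (hv P hP) s
    have hmin : minOver US (fun P => ∑ s, μ s * v P s) = ∑ s, μ s * v Phat s :=
      minOver_eq_of_isLeast hPh (fun P hP => by rw [hvPhat]; exact hlow P hP)
    rw [hmin, hvPhat]
  -- (1) → (2)
  have impl4 : WeakSATractable US → WeakSAFeasible US := by
    intro htr π hπ r hr γ hγ0 hγ1 uhat huhat
    set vf : (S → A → S → ℝ) → S → ℝ := fun P =>
      if h : ∃ u, TpiP π r γ P u = u then h.choose else 0 with hvfdef
    have hfix : ∀ P ∈ US, TpiP π r γ P (vf P) = vf P := by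
      intro P hP
      have h : ∃ u, TpiP π r γ P u = u := tpiP_exists_fixed hπ hγ0 hγ1 (hker P hP)
      simp only [hvfdef, dif_pos h]
      exact h.choose_spec
    have hcont : ContinuousOn vf US := by
      intro Q0 hQ0
      have hbound : ∀ P ∈ US, dist (vf P) (vf Q0)
          ≤ dist (TpiP π r γ P (vf Q0)) (vf Q0) / (1 - γ) := by
        intro P hP
        have h1 : dist (vf P) (vf Q0) ≤ dist (vf P) (TpiP π r γ P (vf Q0))
            + dist (TpiP π r γ P (vf Q0)) (vf Q0) := dist_triangle _ _ _
        have h2 : dist (vf P) (TpiP π r γ P (vf Q0)) ≤ γ * dist (vf P) (vf Q0) := by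
          conv_lhs => rw [← hfix P hP]
          exact_mod_cast (tpiP_lipschitz hπ hγ0 (hker P hP)).dist_le_mul (vf P) (vf Q0)
        have hγ' : (0:ℝ) < 1 - γ := by linarith
        rw [le_div_iff₀ hγ']
        nlinarith [dist_nonneg (x := vf P) (y := vf Q0)]
      have hF : Continuous fun P : S → A → S → ℝ => TpiP π r γ P (vf Q0) := by
        refine continuous_pi fun s => continuous_finset_sum _ fun a _ => ?_
        exact continuous_const.mul (cont_rowsum s a fun s' => r s a s' + γ * vf Q0 s')
      have hg : Continuous fun P : S → A → S → ℝ =>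
          dist (TpiP π r γ P (vf Q0)) (vf Q0) / (1 - γ) :=
        (hF.dist continuous_const).div_const _
      have hg0 : dist (TpiP π r γ Q0 (vf Q0)) (vf Q0) / (1 - γ) = 0 := by
        rw [hfix Q0 hQ0, dist_self, zero_div]
      have htend : Filter.Tendsto (fun P => dist (vf P) (vf Q0)) (nhdsWithin Q0 US) (nhds 0) := by
        refine squeeze_zero' (Filter.Eventually.of_forall fun _ => dist_nonneg)
          (eventually_mem_nhdsWithin.mono fun P hP => hbound P hP) ?_
        have := (hg.tendsto Q0).mono_left (nhdsWithin_le_nhds (s := US))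
        rwa [hg0] at this
      exact tendsto_iff_dist_tendsto_zero.mpr htend
    have hcardS : (0:ℝ) < (Fintype.card S : ℝ) := by exact_mod_cast Fintype.card_pos
    set μ : S → ℝ := fun _ => (Fintype.card S : ℝ)⁻¹ with hμdef
    have hμ : μ ∈ stdSimplex ℝ S := by
      refine ⟨fun s => by positivity, ?_⟩
      simp only [hμdef, Finset.sum_const, Finset.card_univ, nsmul_eq_mul]
      field_simp
    have htr' := htr π hπ r hr γ hγ0 hγ1 vf hfix uhat huhat μ hμ
    have hcont2 : ContinuousOn (fun P => ∑ s, μ s * vf P s) US := by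
      refine continuousOn_finset_sum _ fun s _ => continuousOn_const.mul ?_
      exact (continuous_apply s).comp_continuousOn hcont
    obtain ⟨P0, hP0, heq, hlb⟩ := exists_min hne hcpt hcont2
    have hsum : ∑ s, μ s * vf P0 s = ∑ s, μ s * uhat s := by rw [← heq, htr']
    have hge : ∀ s, uhat s ≤ vf P0 s :=
      uhat_le_vP hne hcpt hπ hγ0 hγ1 hP0 (hker P0 hP0) huhat (hfix P0 hP0)
    have hzero : ∑ s, μ s * (vf P0 s - uhat s) = 0 := by
      rw [Finset.sum_congr rfl fun s _ => mul_sub (μ s) (vf P0 s) (uhat s),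
        Finset.sum_sub_distrib, hsum, sub_self]
    have hall := (Finset.sum_eq_zero_iff_of_nonneg fun s _ =>
      mul_nonneg (hμ.1 s) (by linarith [hge s])).mp hzero
    have hvfeq : vf P0 = uhat := by
      funext s
      have h := hall s (Finset.mem_univ s)
      have hμpos : (0:ℝ) < μ s := by simp only [hμdef]; positivity
      nlinarith [hge s]
    exact ⟨P0, hP0, by rw [← hvfeq]; exact hfix P0 hP0⟩
  exact ⟨⟨impl4, impl3⟩, ⟨impl2, impl1⟩⟩

end RMDP
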